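/- arXiv:1009.4427 — 4 statements merged into one kernel-verified Lean document; each statement's English description precedes it below -/
import Mathlib

section
/- Let S be a nonzero closed subspace of the vector-valued Hardy space H²(D) ⊗ E invariant under multiplication by z. Then there exist a Hilbert space E⋆ and an isometry U : H²(D) ⊗ E⋆ → H²(D) ⊗ E intertwining multiplication by z (U ∘ (M_z ⊗ I) = (M_z ⊗ I) ∘ U) whose range is exactly S. -/
open scoped InnerProductSpace ENNReal

noncomputable section BLHaux

namespace BLHaux

variable {X : Type*} [NormedAddCommGroup X] [NormedSpace ℂ X]

/-- The shifted sequence. -/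
def shiftFun (f : ℕ → X) : ℕ → X := fun n => Nat.casesOn n 0 fun k => f k

@[simp] lemma shiftFun_zero (f : ℕ → X) : shiftFun f 0 = 0 := rfl
@[simp] lemma shiftFun_succ (f : ℕ → X) (n : ℕ) : shiftFun f (n + 1) = f n := rfl

lemma memℓp_shiftFun (f : lp (fun _ : ℕ => X) 2) : Memℓp (shiftFun (⇑f)) 2 := by
  apply memℓp_gen
  apply (summable_nat_add_iff 1).mp
  have h := (lp.memℓp f).summable (p := 2) (by norm_num)
  simpa using h

lemma summable_sq (f : lp (fun _ : ℕ => X) 2) :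
    Summable fun n => ‖f n‖ ^ (2 : ℝ≥0∞).toReal :=
  (lp.memℓp f).summable (by norm_num)

/-- The unilateral shift on `ℓ²(ℕ, X)`. -/
def shiftL : lp (fun _ : ℕ => X) 2 →ₗᵢ[ℂ] lp (fun _ : ℕ => X) 2 where
  toFun f := ⟨shiftFun ⇑f, memℓp_shiftFun f⟩
  map_add' f g := by
    ext n
    show shiftFun (⇑(f + g)) n = shiftFun ⇑f n + shiftFun ⇑g n
    cases n <;> simp [shiftFun, lp.coeFn_add, Pi.add_apply]
  map_smul' c f := by
    ext n
    cases n <;> simp [shiftFun, lp.coeFn_smul, Pi.smul_apply]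
  norm_map' f := by
    have hp : 0 < (2 : ℝ≥0∞).toReal := by norm_num
    set g : lp (fun _ : ℕ => X) 2 := ⟨shiftFun ⇑f, memℓp_shiftFun f⟩ with hg
    have hsum : Summable fun n => ‖g n‖ ^ (2 : ℝ≥0∞).toReal := summable_sq g
    have h1 : ‖g‖ ^ (2 : ℝ≥0∞).toReal = ‖f‖ ^ (2 : ℝ≥0∞).toReal := by
      rw [lp.norm_rpow_eq_tsum hp, lp.norm_rpow_eq_tsum hp]
      rw [hsum.tsum_eq_zero_add]
      have h0 : ‖g 0‖ ^ (2 : ℝ≥0∞).toReal = 0 := by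
        have : g 0 = 0 := rfl
        rw [this]
        simp [Real.zero_rpow (by norm_num : (2 : ℝ≥0∞).toReal ≠ 0)]
      rw [h0, zero_add]
      apply tsum_congr
      intro n
      have : g (n + 1) = f n := rfl
      rw [this]
    exact Real.rpow_left_injOn (by norm_num : (2 : ℝ≥0∞).toReal ≠ 0)
      (Set.mem_setOf.mpr (norm_nonneg g)) (Set.mem_setOf.mpr (norm_nonneg f)) h1

@[simp] lemma shiftL_apply_coe (f : lp (fun _ : ℕ => X) 2) :
    ⇑(shiftL f) = shiftFun ⇑f := rfl

end BLHaux

end BLHaux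

open BLHaux in
set_option maxHeartbeats 2000000 in
/-- **Beurling–Lax–Halmos.** Model the vector-valued Hardy space `H²(𝔻) ⊗ E` as
`ℓ²(ℕ, E)` via Taylor coefficients, with module action the unilateral shift `SE`
(characterized by `(SE f) 0 = 0` and `(SE f) (n+1) = f n`).  If `S` is a nonzero closed
shift-invariant subspace, then there are a Hilbert space `E⋆`, the shift `SEstar` on
`ℓ²(ℕ, E⋆)` (i.e. `H²(𝔻) ⊗ E⋆`), and an isometry `U : ℓ²(ℕ, E⋆) → ℓ²(ℕ, E)`
intertwining the shifts whose range is exactly `S`. -/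
theorem stmt4 {E : Type u} [NormedAddCommGroup E] [InnerProductSpace ℂ E] [CompleteSpace E]
    (SE : lp (fun _ : ℕ => E) 2 →ₗᵢ[ℂ] lp (fun _ : ℕ => E) 2)
    (hSE : ∀ f : lp (fun _ : ℕ => E) 2, (SE f) 0 = 0 ∧ ∀ n : ℕ, (SE f) (n + 1) = f n)
    (S : Submodule ℂ (lp (fun _ : ℕ => E) 2))
    (hScl : IsClosed (S : Set (lp (fun _ : ℕ => E) 2)))
    (hS0 : S ≠ ⊥)
    (hSinv : ∀ x ∈ S, SE x ∈ S) :
    ∃ (Estar : Type u) (_ : NormedAddCommGroup Estar) (_ : InnerProductSpace ℂ Estar)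
      (_ : CompleteSpace Estar)
      (SEstar : lp (fun _ : ℕ => Estar) 2 →ₗᵢ[ℂ] lp (fun _ : ℕ => Estar) 2)
      (U : lp (fun _ : ℕ => Estar) 2 →ₗᵢ[ℂ] lp (fun _ : ℕ => E) 2),
      (∀ f : lp (fun _ : ℕ => Estar) 2, (SEstar f) 0 = 0 ∧ ∀ n : ℕ, (SEstar f) (n + 1) = f n) ∧
      (∀ f, U (SEstar f) = SE (U f)) ∧
      LinearMap.range U.toLinearMap = S := by
  classical
  -- powers of the shift preserve S
  have hpowS : ∀ (n : ℕ) (x : lp (fun _ : ℕ => E) 2), x ∈ S → (SE ^ n) x ∈ S := by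
    intro n
    induction n with
    | zero => intro x hx; simpa [LinearIsometry.coe_one] using hx
    | succ n ih =>
      intro x hx
      have : (SE ^ (n + 1)) x = SE ((SE ^ n) x) := by
        rw [pow_succ']; rfl
      rw [this]
      exact hSinv _ (ih x hx)
  -- coordinates of SE^n y vanish below n
  have hcoord : ∀ (n : ℕ) (y : lp (fun _ : ℕ => E) 2) (j : ℕ), j < n → ((SE ^ n) y) j = 0 := by
    intro n
    induction n with
    | zero => intro y j h; omega
    | succ n ih =>
      intro y j h
      have hy : (SE ^ (n + 1)) y = SE ((SE ^ n) y) := by rw [pow_succ']; rfl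
      rw [hy]
      cases j with
      | zero => exact (hSE ((SE ^ n) y)).1
      | succ j =>
        rw [(hSE ((SE ^ n) y)).2 j]
        exact ih y j (by omega)
  -- the image T = SE(S)
  set T : Submodule ℂ (lp (fun _ : ℕ => E) 2) := S.map SE.toLinearMap with hT
  have hTmem : ∀ x ∈ S, SE x ∈ T := fun x hx => ⟨x, hx, rfl⟩
  have hTS : T ≤ S := by
    rintro x ⟨y, hy, rfl⟩
    exact hSinv y hy
  have hTcl : IsClosed (T : Set (lp (fun _ : ℕ => E) 2)) := by
    have h1 : (T : Set (lp (fun _ : ℕ => E) 2)) = SE '' (S : Set (lp (fun _ : ℕ => E) 2)) := Submodule.map_coe _ _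
    rw [h1]
    exact ((isComplete_image_iff SE.isometry.isUniformInducing).mpr
      hScl.isComplete).isClosed
  haveI : CompleteSpace T := hTcl.completeSpace_coe
  -- the wandering subspace W
  set W : Submodule ℂ (lp (fun _ : ℕ => E) 2) := S ⊓ Tᗮ with hW
  have hWcl : IsClosed (W : Set (lp (fun _ : ℕ => E) 2)) := by
    have : (W : Set (lp (fun _ : ℕ => E) 2)) = (S : Set (lp (fun _ : ℕ => E) 2)) ∩ (Tᗮ : Set (lp (fun _ : ℕ => E) 2)) := rfl
    rw [this]
    exact hScl.inter T.isClosed_orthogonal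
  haveI hWc : CompleteSpace W := hWcl.completeSpace_coe
  have hWS : W ≤ S := inf_le_left
  have hWperp : ∀ w : lp (fun _ : ℕ => E) 2, w ∈ W → ∀ u ∈ T, ⟪w, u⟫_ℂ = 0 := by
    intro w hw u hu
    have := (Submodule.mem_orthogonal T w).mp hw.2 u hu
    rw [← inner_conj_symm, this, map_zero]
  -- decomposition of elements of S
  have hdec : ∀ y ∈ S, ∃ w, w ∈ W ∧ ∃ z ∈ S, y = w + SE z := by
    intro y hy
    obtain ⟨a, ha, b, hb, hab⟩ := T.exists_add_mem_mem_orthogonal y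
    obtain ⟨z, hz, rfl⟩ := ha
    have hbS : b ∈ S := by
      have : b = y - SE.toLinearMap z := by rw [hab]; abel
      rw [this]
      exact S.sub_mem hy (hSinv z hz)
    exact ⟨b, ⟨hbS, hb⟩, z, hz, by rw [hab]; exact add_comm _ _⟩
  -- the orthogonal family V n = SE^n restricted to W
  set Vf : ∀ _ : ℕ, ↥W →ₗᵢ[ℂ] lp (fun _ : ℕ => E) 2 := fun n => (SE ^ n).comp W.subtypeₗᵢ with hVf
  have hVf_apply : ∀ (n : ℕ) (w : W), Vf n w = (SE ^ n) (w : lp (fun _ : ℕ => E) 2) := fun n w => rfl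
  have hVfS : ∀ (n : ℕ) (w : W), Vf n w ∈ S := fun n w => hpowS n _ (hWS w.2)
  have key : ∀ i j : ℕ, i < j → ∀ (v w : ↥W), ⟪Vf i v, Vf j w⟫_ℂ = 0 := by
    intro i j hij v w
    have hj : (SE ^ j) (w : lp (fun _ : ℕ => E) 2) = (SE ^ i) ((SE ^ (j - i)) (w : lp (fun _ : ℕ => E) 2)) := by
      have : SE ^ j = (SE ^ i) * (SE ^ (j - i)) := by
        rw [← pow_add]
        congr 1
        omega
      rw [this, LinearIsometry.coe_mul]
      rfl
    rw [hVf_apply, hVf_apply, hj, LinearIsometry.inner_map_map]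
    -- (SE ^ (j-i)) w ∈ T
    obtain ⟨k, hk⟩ : ∃ k, j - i = k + 1 := ⟨j - i - 1, by omega⟩
    have hmemT : (SE ^ (j - i)) (w : lp (fun _ : ℕ => E) 2) ∈ T := by
      have : (SE ^ (j - i)) (w : lp (fun _ : ℕ => E) 2) = SE ((SE ^ k) (w : lp (fun _ : ℕ => E) 2)) := by
        rw [hk, pow_succ']; rfl
      rw [this]
      exact hTmem _ (hpowS k _ (hWS w.2))
    exact hWperp _ v.2 _ hmemT
  have hVo : OrthogonalFamily ℂ (fun _ : ℕ => ↥W) Vf := by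
    intro i j hij v w
    rcases lt_or_gt_of_ne hij with h | h
    · exact key i j h v w
    · rw [← inner_conj_symm, key j i h w v, map_zero]
  haveI : ∀ n : ℕ, CompleteSpace ((fun _ : ℕ => ↥W) n) := fun _ => hWc
  set U0 : lp (fun _ : ℕ => ↥W) 2 →ₗᵢ[ℂ] lp (fun _ : ℕ => E) 2 := hVo.linearIsometry with hU0
  -- range of U0 is S
  have hM0 : (⨆ n, LinearMap.range (Vf n).toLinearMap) ≤ S := by
    apply iSup_le
    rintro n x ⟨w, rfl⟩
    exact hVfS n w
  set M : Submodule ℂ (lp (fun _ : ℕ => E) 2) := (⨆ n, LinearMap.range (Vf n).toLinearMap).topologicalClosure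
    with hM
  have hMS : M ≤ S := Submodule.topologicalClosure_minimal _ hM0 hScl
  have hVfM : ∀ (n : ℕ) (w : W), Vf n w ∈ M :=
    fun n w => (Submodule.le_topologicalClosure _)
      (Submodule.mem_iSup_of_mem n (LinearMap.mem_range_self _ w))
  haveI : CompleteSpace M :=
    (Submodule.isClosed_topologicalClosure _).completeSpace_coe
  have hSM : S ≤ M := by
    intro x hx
    obtain ⟨m, hm, m', hm', hxm⟩ := M.exists_add_mem_mem_orthogonal x
    have hm'S : m' ∈ S := by
      have : m' = x - m := by rw [hxm]; abel
      rw [this]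
      exact S.sub_mem hx (hMS hm)
    -- m' is orthogonal to every Vf n w
    have horth : ∀ (n : ℕ) (w : W), ⟪Vf n w, m'⟫_ℂ = 0 := by
      intro n w
      exact (Submodule.mem_orthogonal M m').mp hm' _ (hVfM n w)
    -- m' ∈ SE^n(S) for every n
    have hiter : ∀ n : ℕ, ∃ y ∈ S, m' = (SE ^ n) y := by
      intro n
      induction n with
      | zero => exact ⟨m', hm'S, by simp [LinearIsometry.coe_one]⟩
      | succ n ih =>
        obtain ⟨y, hyS, hy⟩ := ih
        obtain ⟨w, hwW, z, hzS, hyz⟩ := hdec y hyS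
        have hw0 : w = 0 := by
          have h1 : ⟪Vf n ⟨w, hwW⟩, m'⟫_ℂ = 0 := horth n ⟨w, hwW⟩
          rw [hy, hVf_apply, LinearIsometry.inner_map_map] at h1
          have h2 : ⟪w, y⟫_ℂ = ⟪w, w⟫_ℂ := by
            rw [hyz, inner_add_right, hWperp w hwW _ (hTmem z hzS), add_zero]
          rw [h2] at h1
          exact inner_self_eq_zero.mp h1
        refine ⟨z, hzS, ?_⟩
        have : y = SE z := by rw [hyz, hw0, zero_add]
        rw [hy, this, pow_succ]
        rfl
    -- hence all coordinates of m' vanish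
    have hm'0 : m' = 0 := by
      apply lp.ext
      funext k
      obtain ⟨y, _, hy⟩ := hiter (k + 1)
      rw [hy]
      exact hcoord (k + 1) y k (by omega)
    rw [hxm, hm'0, add_zero]
    exact hm
  have hrange : LinearMap.range U0.toLinearMap = S := by
    rw [hU0, hVo.range_linearIsometry]
    exact le_antisymm hMS hSM
  -- intertwining
  have hinter : ∀ f : lp (fun _ : ℕ => ↥W) 2, U0 (shiftL f) = SE (U0 f) := by
    intro f
    have h1 : HasSum (fun n => Vf n (f n)) (U0 f) := hVo.hasSum_linearIsometry f
    have h2 : HasSum (fun n => SE (Vf n (f n))) (SE (U0 f)) :=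
      h1.map SE.toLinearMap.toAddMonoidHom SE.continuous
    have h2' : HasSum (fun n => Vf (n + 1) (f n)) (SE (U0 f)) := by
      convert h2 using 2 with n
      rw [hVf_apply, hVf_apply, pow_succ']
      rfl
    set g : ℕ → lp (fun _ : ℕ => E) 2 := fun n => Vf n ((shiftL f) n) with hg
    have h3 : HasSum g (U0 (shiftL f)) := hVo.hasSum_linearIsometry (shiftL f)
    have hg0 : g 0 = 0 := by
      have : (shiftL f) 0 = 0 := rfl
      simp [hg, this]
    have hgs : ∀ n, g (n + 1) = Vf (n + 1) (f n) := by
      intro n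
      have : (shiftL f) (n + 1) = f n := rfl
      simp [hg, this]
    have h4 : HasSum g (SE (U0 f)) := by
      have := (hasSum_nat_add_iff (f := g) 1).mp (by simpa [hgs] using h2')
      simpa [hg0] using this
    exact h3.unique h4
  refine ⟨↥W, inferInstance, inferInstance, hWc, shiftL, U0, ?_, hinter, hrange⟩
  intro f
  exact ⟨rfl, fun n => rfl⟩
end

section
/- Let Λ = (λ_α)_{α ∈ ℕ^m} be weights with 0 < λ_α ≤ M, and define the multivariate weighted shifts M_i on ℓ²(ℕ^m) by M_i e_α = λ_α e_{α+δ_i}. Assume the shifts are strictly hyponormal: λ_{α+δ_i} > λ_α for all α and all i. If W : ℓ²(ℕ^m) → ℓ²(ℕ^m) is a unitary operator commuting with every M_i (i = 1,…,m) whose range is a closed subspace S invariant under all M_i, then S = ℓ²(ℕ^m); equivalently, no proper invariant subspace of ℓ²(ℕ^m) is isometrically isomorphic to ℓ²(ℕ^m) as a module over the shifts. -/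
open scoped ENNReal

lemma aux_decomp {m : ℕ} {γ : Fin m → ℕ} (h : γ ≠ 0) :
    ∃ (γ' : Fin m → ℕ) (j : Fin m), γ = γ' + Pi.single j 1 ∧ (∑ k, γ' k) + 1 = ∑ k, γ k := by
  obtain ⟨j, hj⟩ := Function.ne_iff.mp h
  simp only [Pi.zero_apply] at hj
  have heq : γ = Function.update γ j (γ j - 1) + Pi.single j 1 := by
    funext k
    by_cases hk : k = j
    · subst hk
      simp only [Pi.add_apply, Function.update_self, Pi.single_eq_same]
      omega
    · simp [Function.update_of_ne hk, Pi.single_eq_of_ne hk]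
  refine ⟨_, j, heq, ?_⟩
  conv_rhs => rw [heq]
  simp [Finset.sum_add_distrib, Finset.sum_pi_single']

lemma aux_lt {m : ℕ} {Λ : (Fin m → ℕ) → ℝ}
    (hstrict : ∀ (α : Fin m → ℕ) (i : Fin m), Λ α < Λ (α + Pi.single i 1)) :
    ∀ (n : ℕ) (γ : Fin m → ℕ), (∑ k, γ k) = n → γ ≠ 0 → Λ 0 < Λ γ := by
  intro n
  induction n using Nat.strong_induction_on with
  | _ n ih =>
    intro γ hsum hne
    obtain ⟨γ', j, rfl, hsum'⟩ := aux_decomp hne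
    by_cases h0 : γ' = 0
    · subst h0; simpa using hstrict 0 j
    · exact (ih (∑ k, γ' k) (by omega) γ' rfl h0).trans (hstrict γ' j)

set_option maxHeartbeats 1000000

/-- Rigidity for strictly hyponormal multivariate weighted shifts.  Let
`Λ = (λ_α)_{α ∈ ℕ^m}` be weights with `0 < λ_α ≤ M₀` and `λ_α < λ_{α+δᵢ}` for all `α, i`
(strict hyponormality), and let `Mᵢ` be the corresponding weighted shifts on `ℓ²(ℕ^m)`,
determined by `Mᵢ e_α = λ_α e_{α+δᵢ}`.  If `W` is a unitary module map from `ℓ²(ℕ^m)` onto a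
closed subspace `S = range W` (an isometry commuting with every `Mᵢ`, so `S` is invariant
under all `Mᵢ`), then `S = ℓ²(ℕ^m)`. -/
theorem stmt6 (m : ℕ) (M₀ : ℝ) (Λ : (Fin m → ℕ) → ℝ)
    (hpos : ∀ α, 0 < Λ α) (hbd : ∀ α, Λ α ≤ M₀)
    (hstrict : ∀ (α : Fin m → ℕ) (i : Fin m), Λ α < Λ (α + Pi.single i 1))
    (M : Fin m → (lp (fun _ : Fin m → ℕ => ℂ) 2 →L[ℂ] lp (fun _ : Fin m → ℕ => ℂ) 2))
    (hM : ∀ (i : Fin m) (α : Fin m → ℕ),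
      M i (lp.single 2 α (1:ℂ)) = (Λ α : ℂ) • lp.single 2 (α + Pi.single i 1) (1:ℂ))
    (W : lp (fun _ : Fin m → ℕ => ℂ) 2 →ₗᵢ[ℂ] lp (fun _ : Fin m → ℕ => ℂ) 2)
    (hW : ∀ (i : Fin m) (f : lp (fun _ : Fin m → ℕ => ℂ) 2), W (M i f) = M i (W f)) :
    LinearMap.range W.toLinearMap = ⊤ := by
  have hp2 : (0:ℝ) < (2:ℝ≥0∞).toReal := by norm_num
  have hone : ∀ α : Fin m → ℕ, ‖(lp.single 2 α (1:ℂ) : lp (fun _ : Fin m → ℕ => ℂ) 2)‖ = 1 := by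
    intro α
    simpa using lp.norm_single hp2 (fun _ : Fin m → ℕ => (1:ℂ)) α
  have hlt : ∀ γ : Fin m → ℕ, γ ≠ 0 → Λ 0 < Λ γ := fun γ h => aux_lt hstrict _ γ rfl h
  -- coordinate formula
  have hkey : ∀ (i : Fin m) (f : lp (fun _ : Fin m → ℕ => ℂ) 2) (γ : Fin m → ℕ),
      (M i f) (γ + Pi.single i 1) = (Λ γ : ℂ) * f γ := by
    intro i f γ
    have h1 : HasSum (fun β => M i (lp.single 2 β (f β))) (M i f) :=
      (M i).hasSum (lp.hasSum_single (by norm_num) f)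
    have h2 := (innerSL ℂ (lp.single 2 (γ + Pi.single i 1) (1:ℂ))).hasSum h1
    have h3 : ∀ β, (innerSL ℂ (lp.single 2 (γ + Pi.single i 1) (1:ℂ))) (M i (lp.single 2 β (f β)))
        = if β = γ then (Λ γ : ℂ) * f γ else 0 := by
      intro β
      have : lp.single 2 β (f β) = (f β : ℂ) • (lp.single 2 β (1:ℂ) : lp (fun _ : Fin m → ℕ => ℂ) 2) := by
        rw [← lp.single_smul]; norm_num
      rw [innerSL_apply_apply, this, map_smul, hM i β, lp.inner_single_left]
      simp only [lp.coeFn_smul, Pi.smul_apply]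
      rw [lp.single_apply]
      by_cases hb : β = γ
      · subst hb; simp [RCLike.inner_apply]; ring
      · have : ¬(γ + Pi.single i 1 = β + Pi.single i 1) := by
          intro hc; exact hb (add_left_injective _ hc).symm
        simp [this, hb, RCLike.inner_apply]
    rw [funext h3] at h2
    have h4 := (hasSum_ite_eq γ ((Λ γ : ℂ) * f γ)).unique h2
    have h5 : (innerSL ℂ (lp.single 2 (γ + Pi.single i 1) (1:ℂ))) (M i f)
        = (M i f) (γ + Pi.single i 1) := by
      rw [innerSL_apply_apply, lp.inner_single_left]; simp [RCLike.inner_apply]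
    rw [h5] at h4; exact h4.symm
  -- Parseval
  have hns : ∀ g : lp (fun _ : Fin m → ℕ => ℂ) 2, HasSum (fun δ => ‖g δ‖^2) (‖g‖^2) := by
    intro g
    have := lp.hasSum_norm hp2 g
    have h2 : (2:ℝ≥0∞).toReal = 2 := by norm_num
    simpa [h2, Real.rpow_two] using this
  set f := W (lp.single 2 0 (1:ℂ)) with hf
  have hnf : ‖f‖ = 1 := by rw [hf, W.norm_map, hone]
  -- the key vanishing
  have hzero : ∀ β : Fin m → ℕ, β ≠ 0 → f β = 0 := by
    intro β hβ
    obtain ⟨i, -⟩ := Function.ne_iff.mp hβ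
    have hMf : ‖M i f‖ = Λ 0 := by
      rw [← hW i, W.norm_map, hM i 0, norm_smul, hone]
      simp [abs_of_pos (hpos 0)]
    have hS := hns (M i f)
    have hinj : Function.Injective (fun γ : Fin m → ℕ => γ + Pi.single i 1) :=
      fun a b h => add_left_injective _ h
    have hterm : ∀ γ : Fin m → ℕ, ‖(M i f) (γ + Pi.single i 1)‖^2 = (Λ γ)^2 * ‖f γ‖^2 := by
      intro γ
      rw [hkey i f γ, norm_mul, mul_pow, Complex.norm_real, Real.norm_eq_abs,
        abs_of_pos (hpos γ)]
    have hgs : Summable (fun γ : Fin m → ℕ => (Λ γ)^2 * ‖f γ‖^2) := by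
      have := hS.summable.comp_injective hinj
      exact this.congr fun γ => hterm γ
    have h1 : (∑' γ : Fin m → ℕ, (Λ γ)^2 * ‖f γ‖^2) ≤ ‖M i f‖^2 := by
      rw [← hS.tsum_eq]
      exact Summable.tsum_le_tsum_of_inj _ hinj (fun c _ => by positivity)
        (fun γ => (hterm γ).ge) hgs hS.summable
    have hw : HasSum (fun γ : Fin m → ℕ =>
          (Λ 0)^2 * ‖f γ‖^2 + (if γ = β then ((Λ β)^2 - (Λ 0)^2) * ‖f β‖^2 else 0))
        ((Λ 0)^2 * ‖f‖^2 + ((Λ β)^2 - (Λ 0)^2) * ‖f β‖^2) :=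
      ((hns f).mul_left _).add (hasSum_ite_eq β _)
    have h2 : (Λ 0)^2 * ‖f‖^2 + ((Λ β)^2 - (Λ 0)^2) * ‖f β‖^2
        ≤ ∑' γ : Fin m → ℕ, (Λ γ)^2 * ‖f γ‖^2 := by
      rw [← hw.tsum_eq]
      refine Summable.tsum_le_tsum (fun γ => ?_) hw.summable hgs
      by_cases hγ : γ = β
      · subst hγ; rw [if_pos rfl]; exact le_of_eq (by ring)
      · rw [if_neg hγ, add_zero]
        by_cases h0 : γ = 0
        · subst h0; exact le_rfl
        · exact mul_le_mul_of_nonneg_right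
            (pow_le_pow_left₀ (hpos 0).le (hlt γ h0).le 2) (sq_nonneg _)
    have hββ : Λ 0 < Λ β := hlt β hβ
    have hchain := h2.trans h1
    rw [hMf, hnf] at hchain
    have hsq : Λ 0 ^ 2 < Λ β ^ 2 := by nlinarith [hpos 0]
    have h3 : ‖f β‖^2 ≤ 0 := by nlinarith [hchain, hsq]
    have h4 : ‖f β‖^2 = 0 := le_antisymm h3 (sq_nonneg _)
    have h5 : ‖f β‖ = 0 := pow_eq_zero_iff (n := 2) (by norm_num) |>.mp h4
    exact norm_eq_zero.mp h5
  set c := f 0 with hc0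
  have hfc : f = c • (lp.single 2 0 (1:ℂ) : lp (fun _ : Fin m → ℕ => ℂ) 2) := by
    apply lp.ext; funext δ
    by_cases hδ : δ = 0
    · subst hδ; simp [lp.coeFn_smul, lp.single_apply_self]; rfl
    · simp [hzero δ hδ, lp.coeFn_smul, lp.single_apply_ne _ _ _ hδ, Pi.single_eq_of_ne hδ]
  have hc1 : ‖c‖ = 1 := by
    have h := hnf
    rw [hfc, norm_smul, hone] at h
    simpa using h
  have hcne : c ≠ 0 := by intro h; rw [h] at hc1; simp at hc1
  have hWe : ∀ (n : ℕ) (α : Fin m → ℕ), (∑ k, α k) = n →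
      W (lp.single 2 α (1:ℂ)) = c • lp.single 2 α (1:ℂ) := by
    intro n
    induction n using Nat.strong_induction_on with
    | _ n ih =>
      intro α hsum
      by_cases h0 : α = 0
      · subst h0; exact hfc
      · obtain ⟨α', j, rfl, hsum'⟩ := aux_decomp h0
        have IH := ih (∑ k, α' k) (by omega) α' rfl
        have hne : (Λ α' : ℂ) ≠ 0 := by exact_mod_cast (hpos α').ne'
        have h2 : (Λ α' : ℂ) • W (lp.single 2 (α' + Pi.single j 1) (1:ℂ))
            = (Λ α' : ℂ) • (c • lp.single 2 (α' + Pi.single j 1) (1:ℂ)) := by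
          calc (Λ α' : ℂ) • W (lp.single 2 (α' + Pi.single j 1) (1:ℂ)) = W ((Λ α' : ℂ) • lp.single 2 (α' + Pi.single j 1) (1:ℂ)) := (W.map_smul _ _).symm
            _ = W (M j (lp.single 2 α' (1:ℂ))) := by rw [hM j α']
            _ = M j (W (lp.single 2 α' (1:ℂ))) := hW j _
            _ = M j (c • lp.single 2 α' (1:ℂ)) := by rw [IH]
            _ = c • M j (lp.single 2 α' (1:ℂ)) := (M j).map_smul _ _
            _ = c • ((Λ α' : ℂ) • lp.single 2 (α' + Pi.single j 1) (1:ℂ)) := by rw [hM j α']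
            _ = (Λ α' : ℂ) • (c • lp.single 2 (α' + Pi.single j 1) (1:ℂ)) := smul_comm _ _ _
        exact smul_right_injective (lp (fun _ : Fin m → ℕ => ℂ) 2) hne h2
  have hmem : ∀ β : Fin m → ℕ,
      (lp.single 2 β (1:ℂ) : lp (fun _ : Fin m → ℕ => ℂ) 2) ∈ LinearMap.range W.toLinearMap := by
    intro β
    refine ⟨c⁻¹ • lp.single 2 β (1:ℂ), ?_⟩
    rw [LinearMap.map_smul, LinearIsometry.coe_toLinearMap, hWe (∑ k, β k) β rfl,
      inv_smul_smul₀ hcne]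
  rw [eq_top_iff]
  intro g _
  have hsum := lp.hasSum_single (E := fun _ : Fin m → ℕ => ℂ) (p := 2) (by norm_num) g
  have hclosed : IsClosed ((LinearMap.range W.toLinearMap : Submodule ℂ (lp (fun _ : Fin m → ℕ => ℂ) 2)) : Set (lp (fun _ : Fin m → ℕ => ℂ) 2)) := by
    rw [LinearMap.coe_range, LinearIsometry.coe_toLinearMap]
    exact W.isometry.isClosedEmbedding.isClosed_range
  refine hclosed.mem_of_tendsto hsum (Filter.Eventually.of_forall fun s => ?_)
  refine Submodule.sum_mem _ fun β _ => ?_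
  have : lp.single 2 β (g β) = (g β : ℂ) • (lp.single 2 β (1:ℂ) : lp (fun _ : Fin m → ℕ => ℂ) 2) := by
    rw [← lp.single_smul]; norm_num
  rw [this]
  exact Submodule.smul_mem _ _ (hmem β)
end

section
/- Let W be an isometry on ℓ²(ℕ) commuting with a weighted shift T (T eₙ = λₙ e_{n+1}) whose weights satisfy 0 < λₙ < λ_{n+1} for all n (strictly increasing). Then W e₀ = c e₀ for some scalar c with |c| = 1, and consequently W is a unimodular scalar multiple of the identity. -/
open ENNReal

/-- Evaluation at a coordinate as a continuous linear map on `ℓ²(ℕ)`. -/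
noncomputable def stmt7EvalCLM (i : ℕ) : lp (fun _ : ℕ => ℂ) 2 →L[ℂ] ℂ :=
  LinearMap.mkContinuous
    { toFun := fun f => f i
      map_add' := fun f g => by simp [lp.coeFn_add]
      map_smul' := fun c f => by simp [lp.coeFn_smul] }
    1 (fun f => by show ‖f i‖ ≤ 1 * ‖f‖; simpa using lp.norm_apply_le_norm (by norm_num) f i)

lemma stmt7EvalCLM_apply (i : ℕ) (f : lp (fun _ : ℕ => ℂ) 2) : stmt7EvalCLM i f = f i := rfl

lemma stmt7_hasSum_norm_sq (x : lp (fun _ : ℕ => ℂ) 2) :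
    HasSum (fun i => ‖x i‖ ^ 2) (‖x‖ ^ 2) := by
  have h := lp.hasSum_norm (p := 2) (by norm_num) x
  have h2 : ((2 : ℝ≥0∞).toReal) = ((2 : ℕ) : ℝ) := by norm_num
  rw [h2] at h
  simpa only [Real.rpow_natCast] using h

lemma stmt7_single_eq_smul (k : ℕ) (a : ℂ) :
    lp.single (E := fun _ : ℕ => ℂ) 2 k a = a • lp.single 2 k (1:ℂ) := by
  rw [← lp.single_smul]; norm_num

lemma stmt7_T_coord (lam : ℕ → ℝ)
    (T : lp (fun _ : ℕ => ℂ) 2 →L[ℂ] lp (fun _ : ℕ => ℂ) 2)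
    (hT : ∀ n : ℕ, T (lp.single 2 n (1:ℂ)) = (lam n : ℂ) • lp.single 2 (n + 1) (1:ℂ))
    (g : lp (fun _ : ℕ => ℂ) 2) :
    (T g) 0 = 0 ∧ ∀ m, (T g) (m + 1) = (lam m : ℂ) * g m := by
  have hs : HasSum (fun k : ℕ => lp.single 2 k (g k)) g := lp.hasSum_single (by norm_num) g
  have key : ∀ j, HasSum (fun k => if j = k + 1 then (lam k : ℂ) * g k else 0) ((T g) j) := by
    intro j
    have h3 := (hs.mapL T).mapL (stmt7EvalCLM j)
    have hfun : (fun k => stmt7EvalCLM j (T (lp.single 2 k (g k)))) =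
        fun k => if j = k + 1 then (lam k : ℂ) * g k else 0 := by
      funext k
      rw [stmt7EvalCLM_apply, stmt7_single_eq_smul, map_smul, hT k]
      rw [lp.coeFn_smul, lp.coeFn_smul]
      by_cases h : j = k + 1
      · subst h
        simp [lp.coeFn_smul, lp.single_apply_self, mul_comm]
      · have hz : lp.single (E := fun _ : ℕ => ℂ) 2 (k+1) (1:ℂ) j = 0 :=
          lp.single_apply_ne (E := fun _ : ℕ => ℂ) 2 (k+1) (1:ℂ) h
        simp [lp.coeFn_smul, hz, h]
    rw [hfun] at h3
    exact h3
  constructor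
  · have h0 : HasSum (fun _ : ℕ => (0:ℂ)) ((T g) 0) :=
      (key 0).congr_fun (fun k => by simp)
    exact (h0.unique hasSum_zero).symm ▸ rfl
  · intro m
    have hm : HasSum (fun k => if m + 1 = k + 1 then (lam k : ℂ) * g k else 0)
        ((lam m : ℂ) * g m) := by
      have := hasSum_single (f := fun k => if m + 1 = k + 1 then (lam k : ℂ) * g k else 0) m
        (fun k hk => if_neg (by omega))
      simpa using this
    exact (key (m+1)).unique hm

set_option maxHeartbeats 1000000 in
/-- Let `T` be the weighted shift on `ℓ²(ℕ)` with strictly increasing positive weights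
(`T eₙ = λₙ e_{n+1}`, `0 < λₙ < λ_{n+1}`).  If `W` is a surjective isometry (unitary) on
`ℓ²(ℕ)` commuting with `T`, then `W e₀ = c e₀` for a unimodular scalar `c`, and `W` is the
scalar `c` times the identity. -/
theorem stmt7 (lam : ℕ → ℝ) (hpos : ∀ n, 0 < lam n) (hmono : ∀ n, lam n < lam (n + 1))
    (T : lp (fun _ : ℕ => ℂ) 2 →L[ℂ] lp (fun _ : ℕ => ℂ) 2)
    (hT : ∀ n : ℕ, T (lp.single 2 n (1:ℂ)) = (lam n : ℂ) • lp.single 2 (n + 1) (1:ℂ))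
    (W : lp (fun _ : ℕ => ℂ) 2 →ₗᵢ[ℂ] lp (fun _ : ℕ => ℂ) 2)
    (hWsurj : Function.Surjective W)
    (hWT : ∀ f, W (T f) = T (W f)) :
    ∃ c : ℂ, ‖c‖ = 1 ∧ W (lp.single 2 0 (1:ℂ)) = c • lp.single 2 0 (1:ℂ) ∧
      ∀ f, W f = c • f := by
  set e : ℕ → lp (fun _ : ℕ => ℂ) 2 := fun n => lp.single 2 n (1:ℂ) with he
  have hnorme : ∀ n, ‖e n‖ = 1 := by
    intro n
    have := lp.norm_single (E := fun _ : ℕ => ℂ) (p := 2) (by norm_num) n (1:ℂ)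
    simpa [he] using this
  set f : lp (fun _ : ℕ => ℂ) 2 := W (e 0) with hf
  have hf1 : ‖f‖ = 1 := by rw [hf, W.norm_map, hnorme]
  -- norm of T f
  have hTe0 : ‖T (e 0)‖ = lam 0 := by
    rw [hT 0, norm_smul, hnorme]
    simp [abs_of_pos (hpos 0)]
  have hTf : ‖T f‖ = lam 0 := by
    rw [hf, ← hWT, W.norm_map, hTe0]
  -- coordinates of T f
  obtain ⟨hc0, hcS⟩ := stmt7_T_coord lam T hT f
  -- sum identities
  have h1 : HasSum (fun k => ‖f k‖ ^ 2) 1 := by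
    have := stmt7_hasSum_norm_sq f; rwa [hf1, one_pow] at this
  have h2 : HasSum (fun i => ‖(T f : lp (fun _ : ℕ => ℂ) 2) i‖ ^ 2) ((lam 0) ^ 2) := by
    have := stmt7_hasSum_norm_sq (T f); rwa [hTf] at this
  have h3 : HasSum (fun m => ‖(T f : lp (fun _ : ℕ => ℂ) 2) (m + 1)‖ ^ 2) ((lam 0) ^ 2) := by
    refine (hasSum_nat_add_iff (f := fun i => ‖(T f : lp (fun _ : ℕ => ℂ) 2) i‖ ^ 2) 1).mpr ?_
    simpa [hc0] using h2
  have h4 : HasSum (fun m => (lam m) ^ 2 * ‖f m‖ ^ 2) ((lam 0) ^ 2) := by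
    refine h3.congr_fun fun m => ?_
    rw [hcS m, norm_mul, Complex.norm_real, Real.norm_eq_abs, abs_of_pos (hpos m)]
    ring
  have h5 : HasSum (fun m => (lam 0) ^ 2 * ‖f m‖ ^ 2) ((lam 0) ^ 2) := by
    simpa using h1.mul_left ((lam 0) ^ 2)
  have h6 : HasSum (fun m => ((lam m) ^ 2 - (lam 0) ^ 2) * ‖f m‖ ^ 2) 0 := by
    have := h4.sub h5
    simpa [sub_mul] using this
  have hsm : StrictMono lam := strictMono_nat_of_lt_succ hmono
  have hnn : ∀ m, 0 ≤ ((lam m) ^ 2 - (lam 0) ^ 2) * ‖f m‖ ^ 2 := by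
    intro m
    have : lam 0 ≤ lam m := hsm.monotone (Nat.zero_le m)
    have h02 : (lam 0) ^ 2 ≤ (lam m) ^ 2 := by nlinarith [hpos 0, hpos m]
    exact mul_nonneg (by linarith) (sq_nonneg _)
  have hzero : ∀ m, ((lam m) ^ 2 - (lam 0) ^ 2) * ‖f m‖ ^ 2 = 0 := by
    have := (hasSum_zero_iff_of_nonneg hnn).mp h6
    intro m; exact congrFun this m
  have hfm : ∀ m, m ≠ 0 → f m = 0 := by
    intro m hm
    have hlt : lam 0 < lam m := hsm (Nat.pos_of_ne_zero hm)
    have h02 : (lam 0) ^ 2 < (lam m) ^ 2 := by nlinarith [hpos 0]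
    have := hzero m
    have : ‖f m‖ ^ 2 = 0 := by
      rcases mul_eq_zero.mp this with h | h
      · linarith
      · exact h
    simpa using pow_eq_zero_iff (n := 2) (by norm_num) |>.mp this
  set c : ℂ := f 0 with hcdef
  have hcnorm : ‖c‖ = 1 := by
    have hsingle : HasSum (fun k => ‖f k‖ ^ 2) (‖f 0‖ ^ 2) :=
      hasSum_single 0 (fun k hk => by rw [hfm k hk]; simp)
    have : ‖c‖ ^ 2 = 1 := hsingle.unique h1
    nlinarith [norm_nonneg c]
  have hfe : f = c • e 0 := by
    refine lp.ext (funext fun j => ?_)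
    have hsmul : (c • e 0 : lp (fun _ : ℕ => ℂ) 2) j = c * (e 0 : lp (fun _ : ℕ => ℂ) 2) j := by
      rw [lp.coeFn_smul]; rfl
    cases j with
    | zero =>
      rw [hsmul, he]
      simp [lp.single_apply_self, hcdef]
    | succ m =>
      rw [hsmul, he, hfm (m+1) (Nat.succ_ne_zero m)]
      have hz : lp.single (E := fun _ : ℕ => ℂ) 2 0 (1:ℂ) (m+1) = 0 :=
        lp.single_apply_ne (E := fun _ : ℕ => ℂ) 2 0 (1:ℂ) (Nat.succ_ne_zero m)
      simp [hz]
  have hWe : ∀ n, W (e n) = c • e n := by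
    intro n
    induction n with
    | zero => rw [← hfe]
    | succ n ih =>
      have hcomm := hWT (e n)
      rw [hT n, map_smul, ih, map_smul, hT n] at hcomm
      have hne : (lam n : ℂ) ≠ 0 := by
        exact_mod_cast Complex.ofReal_ne_zero.mpr (hpos n).ne'
      have key : (lam n : ℂ) • W (e (n+1)) = (lam n : ℂ) • (c • e (n+1)) := by
        simp only [he]
        rw [hcomm, smul_comm]
      exact smul_right_injective (lp (fun _ : ℕ => ℂ) 2) hne key
  refine ⟨c, hcnorm, hWe 0, fun g => ?_⟩
  have hs : HasSum (fun k : ℕ => lp.single 2 k (g k)) g := lp.hasSum_single (by norm_num) g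
  have hsW : HasSum (fun k : ℕ => W (lp.single 2 k (g k))) (W g) := by
    have := hs.mapL W.toContinuousLinearMap
    simpa using this
  have hsc : HasSum (fun k : ℕ => c • lp.single 2 k (g k)) (c • g) := hs.const_smul c
  refine hsW.unique (hsc.congr_fun fun k => ?_)
  rw [stmt7_single_eq_smul, map_smul, hWe k, smul_comm]
end

section
/- Let f₁, f₂ ∈ L²ₐ(D) (Bergman space of the unit disk) and suppose W : [f₁] → [f₂] is a unitary module map between the cyclic invariant subspaces they generate (W intertwines multiplication by z and W f₁ = f₂ up to the cyclic structure: W(p·f₁) = p·f₂ for all polynomials p, and W is isometric). Then ∫_D |p(z)|²|f₁(z)|² dA(z) = ∫_D |p(z)|²|f₂(z)|² dA(z) for every polynomial p, and consequently |f₁(z)| = |f₂(z)| for all z ∈ D and Z(f₁) = Z(f₂). -/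
open MeasureTheory Metric Polynomial
open scoped Classical ENNReal

lemma key_density (h : ℂ → ℝ) (hi : IntegrableOn h (ball (0:ℂ) 1))
    (hmom : ∀ a b : ℕ, ∫ z in ball (0:ℂ) 1,
      (z ^ a * (star z) ^ b) * (h z : ℂ) = 0)
    (g : ℂ → ℂ) (hg : Continuous g) :
    ∫ z in ball (0:ℂ) 1, g z * (h z : ℂ) = 0 := by
  set s : Set ℂ := closedBall (0:ℂ) 1 with hs
  haveI : CompactSpace s := isCompact_iff_compactSpace.mp (isCompact_closedBall (0:ℂ) 1)
  set E : C(s, ℂ) → ℂ → ℂ := fun u z => if hz : z ∈ s then u ⟨z, hz⟩ else 0 with hE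
  have hEs : ∀ (u : C(s,ℂ)) (z : ℂ) (hz : z ∈ s), E u z = u ⟨z, hz⟩ := by
    intro u z hz; simp only [hE, dif_pos hz]
  have hEball : ∀ (u : C(s,ℂ)) (z : ℂ) (hz : z ∈ ball (0:ℂ) 1),
      E u z = u ⟨z, ball_subset_closedBall hz⟩ := by
    intro u z hz; exact hEs u z _
  have hE_cont : ∀ u : C(s,ℂ), ContinuousOn (E u) s := by
    intro u
    rw [continuousOn_iff_continuous_restrict]
    convert u.continuous using 1
    funext x
    rw [Set.restrict_apply, hEs u x.1 x.2]
  have hE_bound : ∀ (u : C(s,ℂ)) (z : ℂ), ‖E u z‖ ≤ ‖u‖ := by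
    intro u z
    by_cases hz : z ∈ s
    · rw [hEs u z hz]; exact u.norm_coe_le_norm _
    · simp only [hE, dif_neg hz, norm_zero]; exact norm_nonneg _
  have hInt : ∀ u : C(s,ℂ), IntegrableOn (fun z => E u z * (h z : ℂ)) (ball (0:ℂ) 1) := by
    intro u
    refine Integrable.bdd_mul (c := ‖u‖) hi.ofReal ?_ (ae_of_all _ fun z => hE_bound u z)
    exact ((hE_cont u).mono ball_subset_closedBall).aestronglyMeasurable measurableSet_ball
  -- the continuous linear functional
  have hmap_add : ∀ u v : C(s,ℂ),
      (∫ z in ball (0:ℂ) 1, E (u + v) z * (h z : ℂ))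
        = (∫ z in ball (0:ℂ) 1, E u z * (h z : ℂ))
          + ∫ z in ball (0:ℂ) 1, E v z * (h z : ℂ) := by
    intro u v
    rw [← integral_add (hInt u) (hInt v)]
    refine setIntegral_congr_fun measurableSet_ball fun z hz => ?_
    rw [hEball u z hz, hEball v z hz, hEball (u+v) z hz]
    simp [add_mul]
  have hmap_smul : ∀ (c : ℂ) (u : C(s,ℂ)),
      (∫ z in ball (0:ℂ) 1, E (c • u) z * (h z : ℂ))
        = c * ∫ z in ball (0:ℂ) 1, E u z * (h z : ℂ) := by
    intro c u
    rw [← integral_const_mul]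
    refine setIntegral_congr_fun measurableSet_ball fun z hz => ?_
    rw [hEball (c • u) z hz, hEball u z hz]
    simp [mul_assoc]
  set Φl : C(s,ℂ) →ₗ[ℂ] ℂ :=
    { toFun := fun u => ∫ z in ball (0:ℂ) 1, E u z * (h z : ℂ)
      map_add' := hmap_add
      map_smul' := hmap_smul } with hΦl
  have hΦbound : ∀ u : C(s,ℂ), ‖Φl u‖ ≤ (∫ z in ball (0:ℂ) 1, ‖h z‖) * ‖u‖ := by
    intro u
    refine (norm_integral_le_integral_norm _).trans ?_
    rw [mul_comm]
    rw [← integral_const_mul]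
    refine integral_mono (hInt u).norm (hi.norm.const_mul _) fun z => ?_
    simp only [norm_mul, Complex.norm_real]
    exact mul_le_mul_of_nonneg_right (hE_bound u z) (abs_nonneg _)
  set Φ : C(s,ℂ) →L[ℂ] ℂ := Φl.mkContinuous _ hΦbound with hΦ
  -- the span of monomials
  set mono : ℕ × ℕ → C(s,ℂ) := fun ab =>
    ⟨fun w => (w : ℂ) ^ ab.1 * (star (w : ℂ)) ^ ab.2,
      ((continuous_subtype_val.pow ab.1).mul
        ((continuous_star.comp continuous_subtype_val).pow ab.2))⟩ with hmono
  set M : Submodule ℂ C(s,ℂ) := Submodule.span ℂ (Set.range mono) with hM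
  have hΦmono : ∀ ab : ℕ × ℕ, Φ (mono ab) = 0 := by
    intro ab
    have : (∫ z in ball (0:ℂ) 1, E (mono ab) z * (h z : ℂ))
        = ∫ z in ball (0:ℂ) 1, (z ^ ab.1 * (star z) ^ ab.2) * (h z : ℂ) := by
      refine setIntegral_congr_fun measurableSet_ball fun z hz => ?_
      rw [hEball _ z hz]
      rfl
    simpa [hΦ, hΦl, this] using hmom ab.1 ab.2
  have hM0 : ∀ u ∈ M, Φ u = 0 := by
    intro u hu
    induction hu using Submodule.span_induction with
    | mem x hx => obtain ⟨ab, rfl⟩ := hx; exact hΦmono ab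
    | zero => exact map_zero Φ
    | add x y hx hy ihx ihy => rw [map_add, ihx, ihy, add_zero]
    | smul c x hx ihx => rw [Φ.map_smul, ihx, smul_zero]
  have hMmul : ∀ x ∈ M, ∀ y ∈ M, x * y ∈ M := by
    intro x hx
    induction hx using Submodule.span_induction with
    | mem x hx =>
      obtain ⟨ab, rfl⟩ := hx
      intro y hy
      induction hy using Submodule.span_induction with
      | mem y hy =>
        obtain ⟨cd, rfl⟩ := hy
        refine Submodule.subset_span ⟨(ab.1 + cd.1, ab.2 + cd.2), ?_⟩
        ext w
        simp only [hmono, ContinuousMap.coe_mk, ContinuousMap.mul_apply]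
        ring
      | zero => simpa using M.zero_mem
      | add y z hy hz ihy ihz => simpa [mul_add] using M.add_mem ihy ihz
      | smul c y hy ihy => simpa [mul_smul_comm] using M.smul_mem c ihy
    | zero => intro y hy; simpa using M.zero_mem
    | add x y hx hy ihx ihy =>
      intro z hz; simpa [add_mul] using M.add_mem (ihx z hz) (ihy z hz)
    | smul c x hx ihx =>
      intro z hz; simpa [smul_mul_assoc] using M.smul_mem c (ihx z hz)
  have hMstar : ∀ x ∈ M, star x ∈ M := by
    intro x hx
    induction hx using Submodule.span_induction with
    | mem x hx =>
      obtain ⟨ab, rfl⟩ := hx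
      refine Submodule.subset_span ⟨(ab.2, ab.1), ?_⟩
      ext w
      simp only [hmono, ContinuousMap.coe_mk, ContinuousMap.star_apply, star_mul', star_pow,
        star_star]
      ring
    | zero => simpa using M.zero_mem
    | add x y hx hy ihx ihy => simpa [star_add] using M.add_mem ihx ihy
    | smul c x hx ihx => simpa [star_smul] using M.smul_mem (star c) ihx
  have hpoly : ((polynomialFunctions s).starClosure : Set C(s,ℂ)) ⊆ (M : Set C(s,ℂ)) := by
    intro u hu
    rw [SetLike.mem_coe, polynomialFunctions.starClosure_eq_adjoin_X] at hu
    induction hu using StarAlgebra.adjoin_induction with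
    | mem x hx =>
      rw [Set.mem_singleton_iff] at hx
      subst hx
      refine Submodule.subset_span ⟨(1, 0), ?_⟩
      ext w
      simp [hmono]
    | algebraMap r =>
      have : (algebraMap ℂ C(s,ℂ)) r = r • mono (0, 0) := by
        ext w
        simp [hmono, Algebra.algebraMap_eq_smul_one]
      rw [this]
      exact M.smul_mem r (Submodule.subset_span ⟨(0,0), rfl⟩)
    | add x y hx hy ihx ihy => exact M.add_mem ihx ihy
    | mul x y hx hy ihx ihy => exact hMmul x ihx y ihy
    | star x hx ihx => exact hMstar x ihx
  have hdense : Dense (M : Set C(s,ℂ)) := by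
    rw [dense_iff_closure_eq]
    apply Set.eq_univ_of_univ_subset
    intro u _
    have hu : u ∈ (polynomialFunctions s).starClosure.topologicalClosure := by
      rw [polynomialFunctions.starClosure_topologicalClosure s]; trivial
    exact closure_mono hpoly hu
  have hall : ∀ u : C(s,ℂ), Φ u = 0 := by
    intro u
    have hclosed : IsClosed {u : C(s,ℂ) | Φ u = 0} := isClosed_eq Φ.continuous continuous_const
    have : closure (M : Set C(s,ℂ)) ⊆ {u : C(s,ℂ) | Φ u = 0} :=
      closure_minimal hM0 hclosed
    exact this (by rw [hdense.closure_eq]; trivial)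
  set G : C(s,ℂ) := ⟨s.restrict g, hg.comp continuous_subtype_val⟩ with hG
  have heq : Φ G = ∫ z in ball (0:ℂ) 1, g z * (h z : ℂ) := by
    show (∫ z in ball (0:ℂ) 1, E G z * (h z : ℂ)) = _
    refine setIntegral_congr_fun measurableSet_ball fun z hz => ?_
    rw [hEball G z hz]
    rfl
  rw [← heq]
  exact hall G


lemma no_pos (h : ℂ → ℝ) (hc : ContinuousOn h (ball (0:ℂ) 1))
    (hi : IntegrableOn h (ball (0:ℂ) 1))
    (hvan : ∀ g : ℂ → ℝ, Continuous g → ∫ z in ball (0:ℂ) 1, g z * h z = 0)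
    {z₀ : ℂ} (hz₀ : z₀ ∈ ball (0:ℂ) 1) : ¬ 0 < h z₀ := by
  intro hpos
  set c := h z₀ with hcdef
  have hca : ContinuousAt h z₀ := hc.continuousAt (isOpen_ball.mem_nhds hz₀)
  obtain ⟨δ, hδ, hδ'⟩ := Metric.continuousAt_iff.mp hca (c/2) (by linarith)
  have hz₀n : dist z₀ (0:ℂ) < 1 := mem_ball.mp hz₀
  set r := min δ (1 - dist z₀ 0) with hr
  have hrpos : 0 < r := lt_min hδ (by linarith)
  have hsub : ball z₀ r ⊆ ball (0:ℂ) 1 := by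
    intro z hzr
    rw [mem_ball] at hzr ⊢
    calc dist z 0 ≤ dist z z₀ + dist z₀ 0 := dist_triangle _ _ _
      _ < r + dist z₀ 0 := by linarith
      _ ≤ (1 - dist z₀ 0) + dist z₀ 0 := by
          have := min_le_right δ (1 - dist z₀ 0); linarith
      _ = 1 := by ring
  set g : ℂ → ℝ := fun z => max (1 - dist z z₀ / r) 0 with hg
  have hgc : Continuous g := by
    apply Continuous.max _ continuous_const
    exact continuous_const.sub ((continuous_id.dist continuous_const).div_const r)
  have hg0 : ∀ z, 0 ≤ g z := fun z => le_max_right _ _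
  have hg1 : ∀ z, g z ≤ 1 := by
    intro z
    apply max_le _ (by norm_num)
    have : 0 ≤ dist z z₀ / r := div_nonneg dist_nonneg hrpos.le
    linarith
  have hgsupp : ∀ z, r ≤ dist z z₀ → g z = 0 := by
    intro z hzr
    apply max_eq_right
    have : 1 ≤ dist z z₀ / r := (one_le_div hrpos).mpr hzr
    linarith
  have hintg : IntegrableOn g (ball (0:ℂ) 1) := by
    exact (hgc.continuousOn.integrableOn_compact (isCompact_closedBall (0:ℂ) 1)).mono_set
      ball_subset_closedBall
  have hintgh : IntegrableOn (fun z => g z * h z) (ball (0:ℂ) 1) := by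
    refine Integrable.bdd_mul (c := 1) hi hgc.aestronglyMeasurable.restrict
      (ae_of_all _ fun z => ?_)
    rw [Real.norm_eq_abs, abs_of_nonneg (hg0 z)]
    exact hg1 z
  have hmono : (∫ z in ball (0:ℂ) 1, (c/2) * g z) ≤ ∫ z in ball (0:ℂ) 1, g z * h z := by
    refine setIntegral_mono_on (hintg.const_mul _) hintgh measurableSet_ball fun z hzb => ?_
    by_cases hzr : dist z z₀ < r
    · have hδz : dist z z₀ < δ := lt_of_lt_of_le hzr (min_le_left _ _)
      have := hδ' hδz
      have hhz : c/2 < h z := by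
        rw [Real.dist_eq] at this
        have := abs_lt.mp this
        linarith [this.1]
      calc (c/2) * g z ≤ h z * g z :=
            mul_le_mul_of_nonneg_right hhz.le (hg0 z)
        _ = g z * h z := mul_comm _ _
    · rw [hgsupp z (not_lt.mp hzr)]
      simp
  have hgpos : 0 < ∫ z in ball (0:ℂ) 1, g z := by
    rw [setIntegral_pos_iff_support_of_nonneg_ae (ae_of_all _ hg0) hintg]
    refine lt_of_lt_of_le (measure_ball_pos volume z₀ hrpos) (measure_mono ?_)
    intro z hzr
    refine ⟨?_, hsub hzr⟩
    rw [Function.mem_support, hg]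
    have hzr' := mem_ball.mp hzr
    have : 0 < 1 - dist z z₀ / r := by
      have : dist z z₀ / r < 1 := (div_lt_one hrpos).mpr hzr'
      linarith
    positivity
  have h1 : (0:ℝ) < ∫ z in ball (0:ℂ) 1, (c/2) * g z := by
    rw [integral_const_mul]
    positivity
  rw [hvan g hgc] at hmono
  linarith


/-- Let `f₁, f₂` be Bergman functions on the unit disk (holomorphic and, together with all
their polynomial multiples, in `L²` of area measure on the disk), and suppose
`W : [f₁] → L²ₐ(𝔻)` is an isometric module map on the cyclic submodule generated by `f₁`
with `W (p·f₁) = p·f₂` for all polynomials `p`.  Then `∫|p f₁|² = ∫|p f₂|²` for every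
polynomial `p`, `|f₁| = |f₂|` pointwise on the disk, and `Z(f₁) = Z(f₂)`. -/
theorem stmt9 (f₁ f₂ : ℂ → ℂ)
    (hd₁ : DifferentiableOn ℂ f₁ (ball (0:ℂ) 1))
    (hd₂ : DifferentiableOn ℂ f₂ (ball (0:ℂ) 1))
    (hm : ∀ p : Polynomial ℂ,
      MemLp (fun z => p.eval z * f₁ z) 2 (volume.restrict (ball (0:ℂ) 1)) ∧
      MemLp (fun z => p.eval z * f₂ z) 2 (volume.restrict (ball (0:ℂ) 1)))
    (W : ↥((Submodule.span ℂ {g : Lp ℂ 2 (volume.restrict (ball (0:ℂ) 1)) |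
        ∃ p : Polynomial ℂ, g = ((hm p).1).toLp _}).topologicalClosure)
      →ₗᵢ[ℂ] Lp ℂ 2 (volume.restrict (ball (0:ℂ) 1)))
    (hW : ∀ p : Polynomial ℂ,
      W ⟨((hm p).1).toLp _,
          Submodule.le_topologicalClosure _ (Submodule.subset_span ⟨p, rfl⟩)⟩
        = ((hm p).2).toLp _) :
    (∀ p : Polynomial ℂ, (∫ z in ball (0:ℂ) 1, ‖p.eval z * f₁ z‖ ^ 2)
        = ∫ z in ball (0:ℂ) 1, ‖p.eval z * f₂ z‖ ^ 2) ∧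
    (∀ z ∈ ball (0:ℂ) 1, ‖f₁ z‖ = ‖f₂ z‖) ∧
    {z ∈ ball (0:ℂ) 1 | f₁ z = 0} = {z ∈ ball (0:ℂ) 1 | f₂ z = 0} := by
  -- Part 1 : equality of weighted norms
  have hnorm : ∀ p : Polynomial ℂ, (∫ z in ball (0:ℂ) 1, ‖p.eval z * f₁ z‖ ^ 2)
      = ∫ z in ball (0:ℂ) 1, ‖p.eval z * f₂ z‖ ^ 2 := by
    intro p
    have h1 : ‖((hm p).1).toLp _‖ = ‖((hm p).2).toLp _‖ := by
      have := congrArg norm (hW p)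
      rwa [W.norm_map] at this
    rw [Lp.norm_toLp, Lp.norm_toLp,
      ((hm p).1).eLpNorm_eq_integral_rpow_norm two_ne_zero ENNReal.ofNat_ne_top,
      ((hm p).2).eLpNorm_eq_integral_rpow_norm two_ne_zero ENNReal.ofNat_ne_top] at h1
    have htr : ((2 : ℝ≥0∞).toReal) = ((2:ℕ):ℝ) := by norm_num
    simp only [htr, Real.rpow_natCast] at h1
    have hnn : ∀ g : ℂ → ℂ, 0 ≤ ∫ z in ball (0:ℂ) 1, ‖g z‖ ^ (2:ℕ) :=
      fun g => integral_nonneg fun z => by positivity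
    rw [ENNReal.toReal_ofReal (Real.rpow_nonneg (hnn _) _),
      ENNReal.toReal_ofReal (Real.rpow_nonneg (hnn _) _)] at h1
    have h2 := Real.rpow_left_injOn (x := ((2:ℕ):ℝ)⁻¹) (by norm_num) (hnn _) (hnn _) h1
    exact_mod_cast h2
  refine ⟨hnorm, ?_⟩
  -- the difference of the densities
  set h : ℂ → ℝ := fun z => ‖f₁ z‖ ^ 2 - ‖f₂ z‖ ^ 2 with hh
  have htr : ((2 : ℝ≥0∞).toReal) = ((2:ℕ):ℝ) := by norm_num
  have hInt1 : ∀ p : Polynomial ℂ,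
      Integrable (fun z => ‖p.eval z * f₁ z‖ ^ 2) (volume.restrict (ball (0:ℂ) 1)) := by
    intro p
    refine ((hm p).1.integrable_norm_rpow two_ne_zero ENNReal.ofNat_ne_top).congr
      (ae_of_all _ fun z => ?_)
    simp only [htr, Real.rpow_natCast]
  have hInt2 : ∀ p : Polynomial ℂ,
      Integrable (fun z => ‖p.eval z * f₂ z‖ ^ 2) (volume.restrict (ball (0:ℂ) 1)) := by
    intro p
    refine ((hm p).2.integrable_norm_rpow two_ne_zero ENNReal.ofNat_ne_top).congr
      (ae_of_all _ fun z => ?_)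
    simp only [htr, Real.rpow_natCast]
  have hptid : ∀ (p : Polynomial ℂ) (z : ℂ),
      ‖p.eval z‖ ^ 2 * h z = ‖p.eval z * f₁ z‖ ^ 2 - ‖p.eval z * f₂ z‖ ^ 2 := by
    intro p z
    simp only [hh, norm_mul, mul_pow]
    ring
  have hIntP : ∀ p : Polynomial ℂ,
      Integrable (fun z => ‖p.eval z‖ ^ 2 * h z) (volume.restrict (ball (0:ℂ) 1)) := by
    intro p
    exact ((hInt1 p).sub (hInt2 p)).congr (ae_of_all _ fun z => (hptid p z).symm)
  have hJ : ∀ p : Polynomial ℂ, ∫ z in ball (0:ℂ) 1, ‖p.eval z‖ ^ 2 * h z = 0 := by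
    intro p
    have : (∫ z in ball (0:ℂ) 1, ‖p.eval z‖ ^ 2 * h z)
        = (∫ z in ball (0:ℂ) 1, ‖p.eval z * f₁ z‖ ^ 2)
          - ∫ z in ball (0:ℂ) 1, ‖p.eval z * f₂ z‖ ^ 2 := by
      rw [← integral_sub (hInt1 p) (hInt2 p)]
      exact integral_congr_ae (ae_of_all _ fun z => hptid p z)
    rw [this, hnorm p, sub_self]
  -- polarization
  have hns : ∀ a b : ℂ, ‖a + b‖ ^ 2 = ‖a‖ ^ 2 + ‖b‖ ^ 2 + 2 * (a * star b).re := by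
    intro a b
    have e : ∀ w : ℂ, ‖w‖ ^ 2 = Complex.normSq w := fun w => by
      rw [Complex.sq_norm]
    rw [e, e, e, Complex.normSq_add]
    rfl
  have hRe : ∀ p q : Polynomial ℂ,
      ∫ z in ball (0:ℂ) 1, (p.eval z * star (q.eval z)).re * h z = 0 := by
    intro p q
    have keyid : ∀ z : ℂ, (p.eval z * star (q.eval z)).re * h z
        = (1/2) * ((‖(p+q).eval z‖ ^ 2 * h z - ‖p.eval z‖ ^ 2 * h z) - ‖q.eval z‖ ^ 2 * h z) := by
      intro z
      rw [eval_add, hns]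
      ring
    calc (∫ z in ball (0:ℂ) 1, (p.eval z * star (q.eval z)).re * h z)
        = ∫ z in ball (0:ℂ) 1, (1/2) * ((‖(p+q).eval z‖ ^ 2 * h z - ‖p.eval z‖ ^ 2 * h z)
            - ‖q.eval z‖ ^ 2 * h z) := integral_congr_ae (ae_of_all _ keyid)
      _ = (1/2) * ∫ z in ball (0:ℂ) 1, ((‖(p+q).eval z‖ ^ 2 * h z - ‖p.eval z‖ ^ 2 * h z)
            - ‖q.eval z‖ ^ 2 * h z) := integral_const_mul _ _
      _ = 0 := by
          have hA : Integrable (fun z => ‖(p+q).eval z‖ ^ 2 * h z - ‖p.eval z‖ ^ 2 * h z)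
              (volume.restrict (ball (0:ℂ) 1)) :=
            ((hIntP (p+q)).sub (hIntP p)).congr (ae_of_all _ fun z => rfl)
          rw [integral_sub hA (hIntP q), integral_sub (hIntP (p+q)) (hIntP p), hJ, hJ, hJ]
          ring
  -- integrability of h
  have hIntH : IntegrableOn h (ball (0:ℂ) 1) := by
    refine (hIntP 1).congr (ae_of_all _ fun z => ?_)
    simp
  -- complex moments
  have hmom : ∀ a b : ℕ, ∫ z in ball (0:ℂ) 1, (z ^ a * (star z) ^ b) * (h z : ℂ) = 0 := by
    intro a b
    have hre : ∫ z in ball (0:ℂ) 1, (z ^ a * (star z) ^ b).re * h z = 0 := by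
      have := hRe (X ^ a) (X ^ b)
      simpa using this
    have him : ∫ z in ball (0:ℂ) 1, (z ^ a * (star z) ^ b).im * h z = 0 := by
      have := hRe (X ^ a) (Polynomial.C Complex.I * X ^ b)
      rw [← this]
      refine integral_congr_ae (ae_of_all _ fun z => ?_)
      congr 1
      simp only [eval_mul, eval_C, eval_pow, eval_X, star_mul', star_pow]
      rw [← mul_assoc, Complex.mul_re]
      simp [Complex.star_def, Complex.conj_I]
      exact Or.inl (by ring)
    -- measurability/integrability of the real and imaginary pieces
    have hcont : Continuous fun z : ℂ => z ^ a * (star z) ^ b :=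
      (continuous_pow a).mul ((continuous_star.pow b))
    have hbd : ∀ᵐ z ∂(volume.restrict (ball (0:ℂ) 1)), ‖(z ^ a * (star z) ^ b).re‖ ≤ 1 ∧
        ‖(z ^ a * (star z) ^ b).im‖ ≤ 1 := by
      filter_upwards [ae_restrict_mem measurableSet_ball] with z hz
      have hz1 : ‖z‖ ≤ 1 := by
        have := mem_ball.mp hz
        rw [dist_zero_right] at this
        linarith
      have hb : ‖z ^ a * (star z) ^ b‖ ≤ 1 := by
        rw [norm_mul, norm_pow, norm_pow, norm_star]
        exact mul_le_one₀ (pow_le_one₀ (norm_nonneg _) hz1)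
          (by positivity) (pow_le_one₀ (norm_nonneg _) hz1)
      constructor
      · exact (Complex.abs_re_le_norm _).trans hb
      · exact (Complex.abs_im_le_norm _).trans hb
    have hire : Integrable (fun z => (z ^ a * (star z) ^ b).re * h z)
        (volume.restrict (ball (0:ℂ) 1)) := by
      refine Integrable.bdd_mul (c := 1) hIntH
        ((Complex.continuous_re.comp hcont).aestronglyMeasurable.restrict) ?_
      filter_upwards [hbd] with z hz using hz.1
    have hiim : Integrable (fun z => (z ^ a * (star z) ^ b).im * h z)
        (volume.restrict (ball (0:ℂ) 1)) := by
      refine Integrable.bdd_mul (c := 1) hIntH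
        ((Complex.continuous_im.comp hcont).aestronglyMeasurable.restrict) ?_
      filter_upwards [hbd] with z hz using hz.2
    calc (∫ z in ball (0:ℂ) 1, (z ^ a * (star z) ^ b) * (h z : ℂ))
        = ∫ z in ball (0:ℂ) 1, (((z ^ a * (star z) ^ b).re * h z : ℝ) : ℂ)
            + (((z ^ a * (star z) ^ b).im * h z : ℝ) : ℂ) * Complex.I := by
          refine integral_congr_ae (ae_of_all _ fun z => ?_)
          simp [Complex.ext_iff, Complex.mul_re, Complex.mul_im]
      _ = 0 := by
          have i1 : Integrable (fun z => (((z ^ a * (star z) ^ b).re * h z : ℝ) : ℂ))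
              (volume.restrict (ball (0:ℂ) 1)) := hire.ofReal
          have i2 : Integrable (fun z => (((z ^ a * (star z) ^ b).im * h z : ℝ) : ℂ) * Complex.I)
              (volume.restrict (ball (0:ℂ) 1)) := hiim.ofReal.mul_const _
          rw [integral_add i1 i2, integral_mul_const]
          have e1 : ∫ z in ball (0:ℂ) 1, (((z ^ a * (star z) ^ b).re * h z : ℝ) : ℂ)
              = ((∫ z in ball (0:ℂ) 1, (z ^ a * (star z) ^ b).re * h z : ℝ) : ℂ) :=
            integral_ofReal
          have e2 : ∫ z in ball (0:ℂ) 1, (((z ^ a * (star z) ^ b).im * h z : ℝ) : ℂ)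
              = ((∫ z in ball (0:ℂ) 1, (z ^ a * (star z) ^ b).im * h z : ℝ) : ℂ) :=
            integral_ofReal
          rw [e1, e2, hre, him]
          simp
  -- pointwise vanishing of h on the ball
  have hvanC : ∀ g : ℂ → ℂ, Continuous g →
      ∫ z in ball (0:ℂ) 1, g z * (h z : ℂ) = 0 := fun g hg => key_density h hIntH hmom g hg
  have hvanR : ∀ g : ℂ → ℝ, Continuous g →
      ∫ z in ball (0:ℂ) 1, g z * h z = 0 := by
    intro g hg
    have := hvanC (fun z => (g z : ℂ)) (Complex.continuous_ofReal.comp hg)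
    rw [show (fun z => ((g z : ℂ) * (h z : ℂ))) = fun z => (((g z * h z : ℝ)) : ℂ) from
      funext fun z => by push_cast; ring] at this
    have e : (∫ z in ball (0:ℂ) 1, ((g z * h z : ℝ) : ℂ))
        = ((∫ z in ball (0:ℂ) 1, g z * h z : ℝ) : ℂ) := integral_ofReal
    rw [e] at this
    exact_mod_cast this
  have hContH : ContinuousOn h (ball (0:ℂ) 1) := by
    refine ContinuousOn.sub ?_ ?_
    · exact (hd₁.continuousOn.norm).pow 2
    · exact (hd₂.continuousOn.norm).pow 2
  have hzero : ∀ z ∈ ball (0:ℂ) 1, h z = 0 := by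
    intro z hz
    have h1 : ¬ 0 < h z := no_pos h hContH hIntH hvanR hz
    have h2 : ¬ 0 < -h z := by
      refine no_pos (fun w => -h w) hContH.neg hIntH.neg ?_ hz
      intro g hg
      rw [show (fun z => g z * -h z) = fun z => -(g z * h z) from funext fun z => by ring]
      rw [integral_neg, hvanR g hg, neg_zero]
    have := not_lt.mp h1
    have := not_lt.mp h2
    linarith
  have hptw : ∀ z ∈ ball (0:ℂ) 1, ‖f₁ z‖ = ‖f₂ z‖ := by
    intro z hz
    have h0 : ‖f₁ z‖ ^ 2 = ‖f₂ z‖ ^ 2 := by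
      have := hzero z hz
      simp only [hh] at this
      linarith
    have := (sq_eq_sq_iff_abs_eq_abs _ _).mp h0
    rwa [abs_of_nonneg (norm_nonneg _), abs_of_nonneg (norm_nonneg _)] at this
  refine ⟨hptw, ?_⟩
  ext z
  simp only [Set.mem_setOf_eq]
  constructor
  · rintro ⟨hz, h0⟩
    refine ⟨hz, norm_eq_zero.mp ?_⟩
    rw [← hptw z hz, h0, norm_zero]
  · rintro ⟨hz, h0⟩
    refine ⟨hz, norm_eq_zero.mp ?_⟩
    rw [hptw z hz, h0, norm_zero]
end
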